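/- Let (Ω, F, P) be a probability space and let (V_n)_{n∈ℕ} be a sequence of independent, identically distributed real-valued random variables with 0 ≤ V_n(ω) < 1 for all ω, and suppose there exists δ > 0 with P(V_0 ≥ δ) > 0. Then P-almost surely the stick-breaking weights satisfy ∑'_{j=0}^{∞} V_j · ∏_{i=0}^{j−1} (1 − V_i) = 1. -/

import Mathlib

open MeasureTheory ProbabilityTheory Filter Topology

set_option maxHeartbeats 1000000 in
/-- If `(V n)` is an i.i.d. sequence of random variables with values in `[0,1)`
which is not almost surely arbitrarily small (there is `δ > 0` with
`P(V 0 ≥ δ) > 0`), then almost surely the stick-breaking weights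
`π j = V j * ∏_{i<j} (1 - V i)` sum to `1`. -/
theorem stick_breaking_weights_tsum_eq_one_ae
    {Ω : Type*} [MeasurableSpace Ω] (P : Measure Ω) [IsProbabilityMeasure P]
    (V : ℕ → Ω → ℝ) (hmeas : ∀ n, Measurable (V n))
    (hindep : iIndepFun V P)
    (hident : ∀ n, IdentDistrib (V n) (V 0) P P)
    (hbdd : ∀ n ω, 0 ≤ V n ω ∧ V n ω < 1)
    (δ : ℝ) (hδ : 0 < δ) (hpos : 0 < P {ω | δ ≤ V 0 ω}) :
    ∀ᵐ ω ∂P, ∑' j : ℕ, V j ω * ∏ i ∈ Finset.range j, (1 - V i ω) = 1 := by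
  set s : ℕ → Set Ω := fun n => V n ⁻¹' Set.Ici δ with hs_def
  have hsm : ∀ n, MeasurableSet (s n) := fun n => (hmeas n) measurableSet_Ici
  -- the sets are independent
  have hindepSet : iIndepSet s P := by
    rw [iIndepSet_iff_meas_biInter hsm]
    intro t
    exact hindep.measure_inter_preimage_eq_mul t
      (sets := fun _ => Set.Ici δ) (fun i _ => measurableSet_Ici)
  -- each has the same positive measure
  have hmeq : ∀ n, P (s n) = P (s 0) := fun n =>
    (hident n).measure_mem_eq measurableSet_Ici
  have hs0 : P (s 0) ≠ 0 := by
    have : {ω | δ ≤ V 0 ω} = s 0 := rfl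
    rw [← this]; exact hpos.ne'
  have htsum : (∑' n, P (s n)) = ⊤ := by
    have : (∑' n, P (s n)) = ∑' _ : ℕ, P (s 0) := by
      congr 1; ext n; exact hmeq n
    rw [this]
    exact ENNReal.tsum_const_eq_top_of_ne_zero hs0
  have hlimsup : P (limsup s atTop) = 1 :=
    ProbabilityTheory.measure_limsup_eq_one hsm hindepSet htsum
  have hae : ∀ᵐ ω ∂P, ω ∈ limsup s atTop := by
    rw [ae_iff]
    have hcm : MeasurableSet (limsup s atTop) :=
      MeasurableSet.measurableSet_limsup hsm
    have : {ω | ¬ ω ∈ limsup s atTop} = (limsup s atTop)ᶜ := rfl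
    rw [this, measure_compl hcm (measure_ne_top _ _), hlimsup, measure_univ, tsub_self]
  filter_upwards [hae] with ω hω
  -- ω satisfies: frequently δ ≤ V n ω
  rw [mem_limsup_iff_frequently_mem] at hω
  set Q : ℕ → ℝ := fun n => ∏ i ∈ Finset.range n, (1 - V i ω) with hQ
  have hQnonneg : ∀ n, 0 ≤ Q n := fun n =>
    Finset.prod_nonneg fun i _ => by linarith [(hbdd i ω).2]
  have hQanti : Antitone Q := antitone_nat_of_succ_le fun n => by
    rw [hQ]
    simp only [Finset.prod_range_succ]
    have h1 : 1 - V n ω ≤ 1 := by linarith [(hbdd n ω).1]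
    calc Q n * (1 - V n ω) ≤ Q n * 1 :=
          mul_le_mul_of_nonneg_left h1 (hQnonneg n)
      _ = Q n := mul_one _
  -- Q converges to its infimum
  have hbdd' : BddBelow (Set.range Q) := ⟨0, fun x ⟨n, hn⟩ => hn ▸ hQnonneg n⟩
  set L : ℝ := ⨅ n, Q n with hL
  have hQL : Tendsto Q atTop (𝓝 L) := tendsto_atTop_ciInf hQanti hbdd'
  have hLnonneg : 0 ≤ L := le_ciInf hQnonneg
  -- extract subsequence where δ ≤ V n ω
  obtain ⟨φ, hφmono, hφ⟩ := extraction_of_frequently_atTop hω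
  have hφtendsto : Tendsto φ atTop atTop := hφmono.tendsto_atTop
  have h1 : Tendsto (fun k => Q (φ k)) atTop (𝓝 L) := hQL.comp hφtendsto
  have h2 : Tendsto (fun k => Q (φ k + 1)) atTop (𝓝 L) :=
    hQL.comp (tendsto_atTop_mono (fun k => Nat.le_succ (φ k)) hφtendsto)
  have hstep : ∀ k, Q (φ k + 1) ≤ (1 - δ) * Q (φ k) := fun k => by
    rw [hQ]
    simp only [Finset.prod_range_succ]
    rw [mul_comm ((1:ℝ) - δ)]
    have hk : δ ≤ V (φ k) ω := hφ k
    exact mul_le_mul_of_nonneg_left (by linarith) (hQnonneg (φ k))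
  have hle : L ≤ (1 - δ) * L :=
    le_of_tendsto_of_tendsto' h2 (h1.const_mul (1 - δ)) hstep
  have hL0 : L = 0 := by nlinarith
  have hQ0 : Tendsto Q atTop (𝓝 0) := hL0 ▸ hQL
  -- partial sums telescope
  have hpartial : ∀ n, ∑ j ∈ Finset.range n,
      V j ω * ∏ i ∈ Finset.range j, (1 - V i ω) = 1 - Q n := by
    intro n
    induction n with
    | zero => simp [hQ]
    | succ n ih =>
      rw [Finset.sum_range_succ, ih, hQ]
      simp only [Finset.prod_range_succ]
      ring
  have hnonneg : ∀ j, 0 ≤ V j ω * ∏ i ∈ Finset.range j, (1 - V i ω) := fun j =>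
    mul_nonneg (hbdd j ω).1 (hQnonneg j)
  have hhs : HasSum (fun j => V j ω * ∏ i ∈ Finset.range j, (1 - V i ω)) 1 := by
    rw [hasSum_iff_tendsto_nat_of_nonneg hnonneg]
    simp only [hpartial]
    have : Tendsto (fun n => 1 - Q n) atTop (𝓝 (1 - 0)) :=
      (tendsto_const_nhds).sub hQ0
    simpa using this
  exact hhs.tsum_eq
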